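/- For integers r+1 ≤ m ≤ 2r-1 and m-r ≤ s ≤ t ≤ r, ∑_{j=r+1-t}^{m-s} C(m,j) ≥ ∑_{i=s}^{t} C(m,i). -/

import Mathlib

theorem stmt_10 (m r s t : ℕ) (hm1 : r + 1 ≤ m) (hm2 : m ≤ 2 * r - 1)
    (hs : m - r ≤ s) (hst : s ≤ t) (htr : t ≤ r) :
    ∑ i ∈ Finset.Icc s t, m.choose i ≤ ∑ j ∈ Finset.Icc (r + 1 - t) (m - s), m.choose j := by
  have htm : t ≤ m := le_trans htr (le_trans (Nat.le_succ r) hm1)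
  have key : ∑ i ∈ Finset.Icc s t, m.choose i
      = ∑ j ∈ Finset.Icc (m - t) (m - s), m.choose j := by
    refine Finset.sum_nbij' (fun i => m - i) (fun j => m - j) ?_ ?_ ?_ ?_ ?_
    · intro i hi
      simp only [Finset.mem_Icc] at *
      exact ⟨Nat.sub_le_sub_left hi.2 m, Nat.sub_le_sub_left hi.1 m⟩
    · intro j hj
      simp only [Finset.mem_Icc] at *
      constructor
      · have := Nat.sub_le_sub_left hj.2 m
        rwa [Nat.sub_sub_self (le_trans hst htm)] at this
      · have := Nat.sub_le_sub_left hj.1 m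
        rwa [Nat.sub_sub_self htm] at this
    · intro i hi
      simp only [Finset.mem_Icc] at hi
      exact Nat.sub_sub_self (le_trans hi.2 htm)
    · intro j hj
      simp only [Finset.mem_Icc] at hj
      exact Nat.sub_sub_self (le_trans hj.2 (Nat.sub_le m s))
    · intro i hi
      simp only [Finset.mem_Icc] at hi
      exact (Nat.choose_symm (le_trans hi.2 htm)).symm
  rw [key]
  apply Finset.sum_le_sum_of_subset
  apply Finset.Icc_subset_Icc_left
  exact Nat.sub_le_sub_right hm1 t
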